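/- Let B be a commutative noetherian ring, K ⊆ B an ideal, and A a commutative noetherian B-algebra such that the extended ideal K·A is contained in the Jacobson radical of A. Then A is flat as a B-module if and only if A/K^{n+1}A is flat as a B/K^{n+1}-module for every natural number n. -/

import Mathlib

open TensorProduct LinearMap

universe u v
theorem krull_aux {R : Type u} {M : Type v} [CommRing R] [IsNoetherianRing R]
    [AddCommGroup M] [Module R M] [Module.Finite R M] (J : Ideal R)
    (hJ : J ≤ (⊥ : Ideal R).jacobson) (x : M)
    (h : ∀ i : ℕ, x ∈ (J ^ i • ⊤ : Submodule R M)) : x = 0 := by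
  -- lift everything to a common universe
  let eh : R →+* ULift.{v} R := (ULift.ringEquiv (R := R)).symm.toRingHom
  haveI : IsNoetherianRing (ULift.{v} R) :=
    isNoetherianRing_of_ringEquiv R (ULift.ringEquiv (R := R)).symm
  haveI : Module.Finite R (ULift.{u} M) :=
    Module.Finite.equiv (ULift.moduleEquiv (R := R) (M := M)).symm
  haveI : Module.Finite (ULift.{v} R) (ULift.{u} M) := by
    obtain ⟨s, hs⟩ := (Module.finite_def (R := R) (M := ULift.{u} M)).mp inferInstance
    refine ⟨⟨s, ?_⟩⟩
    rw [eq_top_iff]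
    intro m _
    have hm : m ∈ Submodule.span R (s : Set (ULift.{u} M)) := by rw [hs]; trivial
    refine Submodule.span_induction (fun y hy => Submodule.subset_span hy)
      (Submodule.zero_mem _) (fun y z _ _ hy hz => Submodule.add_mem _ hy hz)
      (fun r y _ hy => ?_) hm
    have : r • y = (ULift.up r) • y := rfl
    rw [this]
    exact Submodule.smul_mem _ _ hy
  -- transfer the memberships
  have h' : ∀ i : ℕ, (ULift.up x : ULift.{u} M) ∈
      ((J.map eh) ^ i • ⊤ : Submodule (ULift.{v} R) (ULift.{u} M)) := by
    intro i
    rw [← Ideal.map_pow]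
    refine Submodule.smul_induction_on (h i) (fun r hr n _ => ?_)
      (fun u v hu hv => ?_)
    · have : (ULift.up (r • n) : ULift.{u} M) = (ULift.up r) • (ULift.up n) := rfl
      rw [this]
      exact Submodule.smul_mem_smul (Ideal.mem_map_of_mem eh hr) trivial
    · have : (ULift.up (u + v) : ULift.{u} M) = ULift.up u + ULift.up v := rfl
      rw [this]
      exact Submodule.add_mem _ hu hv
  have hx0 : (ULift.up x : ULift.{u} M) ∈
      (⨅ i : ℕ, (J.map eh) ^ i • ⊤ : Submodule (ULift.{v} R) (ULift.{u} M)) :=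
    Submodule.mem_iInf _ |>.mpr h'
  obtain ⟨r', hr'⟩ := (Ideal.mem_iInf_smul_pow_eq_bot_iff (J.map eh) (ULift.up x)).mp hx0
  obtain ⟨s, hsJ, hse⟩ := Ideal.mem_image_of_mem_map_of_surjective eh
    (ULift.ringEquiv (R := R)).symm.surjective r'.2
  have hsx : s • x = x := by
    have h1 : (r' : ULift.{v} R) • (ULift.up x : ULift.{u} M) = ULift.up (s • x) := by
      rw [← hse]; rfl
    have h2 := h1.symm.trans hr'
    exact congrArg ULift.down h2
  have hu : IsUnit (1 - s) := by
    have hj := hJ hsJ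
    rw [Ideal.mem_jacobson_bot] at hj
    have := hj (-1)
    rwa [mul_neg_one, neg_add_eq_sub] at this
  obtain ⟨u, huu⟩ := hu
  calc x = (↑u⁻¹ * (1 - s)) • x := by rw [← huu, Units.inv_mul, one_smul]
    _ = (↑u⁻¹ : R) • ((1 - s) • x) := by rw [mul_smul]
    _ = 0 := by rw [sub_smul, one_smul, hsx, sub_self, smul_zero]


section
variable (B A : Type*) [CommRing B] [CommRing A] [Algebra B A]

theorem flat_quot_aux (Q : Ideal B) [Module.Flat B A] :
    letI : Algebra (B ⧸ Q) (A ⧸ Q.map (algebraMap B A)) :=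
      (Ideal.quotientMap (Q.map (algebraMap B A)) (algebraMap B A)
        Ideal.le_comap_map).toAlgebra
    Module.Flat (B ⧸ Q) (A ⧸ Q.map (algebraMap B A)) := by
  letI : Algebra (B ⧸ Q) (A ⧸ Q.map (algebraMap B A)) :=
      (Ideal.quotientMap (Q.map (algebraMap B A)) (algebraMap B A)
        Ideal.le_comap_map).toAlgebra
  have halg : algebraMap (B ⧸ Q) (A ⧸ Q.map (algebraMap B A)) =
      Ideal.quotientMap (Q.map (algebraMap B A)) (algebraMap B A) Ideal.le_comap_map := rfl
  have fact1 : ∀ (b : B) (a : A),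
      b • (Ideal.Quotient.mk (Q.map (algebraMap B A)) a)
        = Ideal.Quotient.mk (Q.map (algebraMap B A)) (b • a) := fun b a =>
    (Submodule.Quotient.mk_smul ((Q.map (algebraMap B A)) : Submodule A A) b a).symm
  have fact2 : ∀ (b : B) (y : A ⧸ Q.map (algebraMap B A)),
      (Ideal.Quotient.mk Q b) • y = b • y := by
    intro b y
    obtain ⟨a, rfl⟩ := Ideal.Quotient.mk_surjective y
    rw [Algebra.smul_def, halg, Ideal.quotientMap_mk, ← map_mul, ← Algebra.smul_def, fact1]
  haveI : IsScalarTower B (B ⧸ Q) (A ⧸ Q.map (algebraMap B A)) := by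
    constructor
    intro b s y
    obtain ⟨c, rfl⟩ := Ideal.Quotient.mk_surjective s
    have hbs : b • (Ideal.Quotient.mk Q c) = Ideal.Quotient.mk Q (b * c) := by
      rw [Algebra.smul_def, Ideal.Quotient.algebraMap_eq, ← map_mul]
    rw [hbs, fact2, fact2, mul_smul]
  have hFt : ∀ (s : B ⧸ Q) (a : A),
      LinearMap.liftBaseChange (B ⧸ Q) (Ideal.Quotient.mkₐ B (Q.map (algebraMap B A))).toLinearMap
        (s ⊗ₜ a) = s • Ideal.Quotient.mk (Q.map (algebraMap B A)) a := fun s a =>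
    LinearMap.liftBaseChange_tmul _ _ _ _
  have hsurj : Function.Surjective
      (LinearMap.liftBaseChange (B ⧸ Q)
        (Ideal.Quotient.mkₐ B (Q.map (algebraMap B A))).toLinearMap) := by
    intro z
    obtain ⟨a, rfl⟩ := Ideal.Quotient.mk_surjective z
    exact ⟨1 ⊗ₜ a, by rw [hFt, one_smul]⟩
  have hker : Submodule.restrictScalars B ((Q.map (algebraMap B A)) : Submodule A A)
      ≤ LinearMap.ker (TensorProduct.mk B (B ⧸ Q) A 1) := by
    intro c hc
    have hc' : c ∈ Q • (⊤ : Submodule B A) := by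
      rw [Ideal.smul_top_eq_map]; exact hc
    rw [LinearMap.mem_ker]
    refine Submodule.smul_induction_on hc' (fun q hq a _ => ?_) (fun u v hu hv => by
      simp only [map_add, hu, hv, add_zero])
    show (1 : B ⧸ Q) ⊗ₜ[B] (q • a) = 0
    have h1 : q • (1 : B ⧸ Q) = 0 := by
      have h2 : q • (1 : B ⧸ Q) = Ideal.Quotient.mk Q q := by
        rw [Algebra.smul_def, mul_one]
        rfl
      rw [h2, Ideal.Quotient.eq_zero_iff_mem]
      exact hq
    rw [tmul_smul, smul_tmul', h1, zero_tmul]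
  have hinv : ∀ y : (B ⧸ Q) ⊗[B] A,
      (Submodule.liftQ _ (TensorProduct.mk B (B ⧸ Q) A 1) hker)
        ((Submodule.Quotient.restrictScalarsEquiv B
          ((Q.map (algebraMap B A)) : Submodule A A)).symm
          (LinearMap.liftBaseChange (B ⧸ Q)
            (Ideal.Quotient.mkₐ B (Q.map (algebraMap B A))).toLinearMap y)) = y := by
    intro y
    induction y using TensorProduct.induction_on with
    | zero => simp
    | tmul s a =>
      obtain ⟨b, rfl⟩ := Ideal.Quotient.mk_surjective s
      rw [hFt, fact2, fact1]
      rw [show (Ideal.Quotient.mk (Q.map (algebraMap B A)) (b • a))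
        = Submodule.Quotient.mk (b • a) from rfl]
      rw [Submodule.Quotient.restrictScalarsEquiv_symm_mk, Submodule.liftQ_apply]
      show (1 : B ⧸ Q) ⊗ₜ[B] (b • a) = _
      rw [tmul_smul, smul_tmul']
      congr 1
      rw [Algebra.smul_def, mul_one]
      rfl
    | add u v hu hv => rw [map_add, map_add, map_add, hu, hv]
  have hinj : Function.Injective
      (LinearMap.liftBaseChange (B ⧸ Q)
        (Ideal.Quotient.mkₐ B (Q.map (algebraMap B A))).toLinearMap) := by
    intro y z hyz
    rw [← hinv y, ← hinv z, hyz]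
  exact Module.Flat.of_linearEquiv (R := B ⧸ Q) (M := (B ⧸ Q) ⊗[B] A) (N := A ⧸ Q.map (algebraMap B A))
    (LinearEquiv.ofBijective _ ⟨hinj, hsurj⟩).symm

set_option maxHeartbeats 4000000 in
set_option synthInstance.maxHeartbeats 2000000 in
theorem mem_of_lTensor_eq_zero (Q I : Ideal B)
    (hflat : letI : Algebra (B ⧸ Q) (A ⧸ Q.map (algebraMap B A)) :=
      (Ideal.quotientMap (Q.map (algebraMap B A)) (algebraMap B A)
        Ideal.le_comap_map).toAlgebra
      Module.Flat (B ⧸ Q) (A ⧸ Q.map (algebraMap B A)))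
    (x : A ⊗[B] I) (hx : lTensor A (Submodule.subtype I) x = 0) :
    x ∈ LinearMap.range (lTensor A (Submodule.subtype
          (Submodule.comap (Submodule.subtype (I : Submodule B B)) (Q : Submodule B B))))
        ⊔ Submodule.restrictScalars B
          ((Q.map (algebraMap B A)) • (⊤ : Submodule A (A ⊗[B] I))) := by
  letI : Algebra (B ⧸ Q) (A ⧸ Q.map (algebraMap B A)) :=
      (Ideal.quotientMap (Q.map (algebraMap B A)) (algebraMap B A)
        Ideal.le_comap_map).toAlgebra
  haveI hflat' : Module.Flat (B ⧸ Q) (A ⧸ Q.map (algebraMap B A)) := hflat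
  have halg : algebraMap (B ⧸ Q) (A ⧸ Q.map (algebraMap B A)) =
      Ideal.quotientMap (Q.map (algebraMap B A)) (algebraMap B A) Ideal.le_comap_map := rfl
  have fact1 : ∀ (b : B) (a : A),
      b • (Ideal.Quotient.mk (Q.map (algebraMap B A)) a)
        = Ideal.Quotient.mk (Q.map (algebraMap B A)) (b • a) := fun b a =>
    (Submodule.Quotient.mk_smul ((Q.map (algebraMap B A)) : Submodule A A) b a).symm
  have fact2 : ∀ (b : B) (y : A ⧸ Q.map (algebraMap B A)),
      (Ideal.Quotient.mk Q b) • y = b • y := by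
    intro b y
    obtain ⟨a, rfl⟩ := Ideal.Quotient.mk_surjective y
    rw [Algebra.smul_def, halg, Ideal.quotientMap_mk, ← map_mul, ← Algebra.smul_def, fact1]
  have fact3 : ∀ (b : B) (y : B ⧸ Q), (Ideal.Quotient.mk Q b) • y = b • y := by
    intro b y
    rw [smul_eq_mul, Algebra.smul_def, Ideal.Quotient.algebraMap_eq]
  -- instances for the bridge equivalence
  haveI sc1 : SMulCommClass (B ⧸ Q) B (A ⧸ Q.map (algebraMap B A)) := by
    constructor
    intro s b y
    obtain ⟨c, rfl⟩ := Ideal.Quotient.mk_surjective s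
    rw [fact2, fact2, smul_comm]
  haveI sc2 : SMulCommClass B (B ⧸ Q) (A ⧸ Q.map (algebraMap B A)) := by
    constructor
    intro b s y
    obtain ⟨c, rfl⟩ := Ideal.Quotient.mk_surjective s
    rw [fact2, fact2, smul_comm]
  have fact4 : ∀ (b : B) (j : ↥(I.map (Ideal.Quotient.mk Q))),
      (Ideal.Quotient.mk Q b) • j = b • j := by
    intro b j
    ext
    show (Ideal.Quotient.mk Q b) • (j : B ⧸ Q) = b • (j : B ⧸ Q)
    exact fact3 b j
  haveI comp1 : CompatibleSMul B (B ⧸ Q) (A ⧸ Q.map (algebraMap B A))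
      ↥(I.map (Ideal.Quotient.mk Q)) := by
    constructor
    intro s m n
    obtain ⟨c, rfl⟩ := Ideal.Quotient.mk_surjective s
    rw [fact2, fact4, smul_tmul]
  haveI comp2 : CompatibleSMul (B ⧸ Q) B (A ⧸ Q.map (algebraMap B A))
      ↥(I.map (Ideal.Quotient.mk Q)) := by
    constructor
    intro b m n
    rw [← fact2, ← fact4, smul_tmul]
  -- the two projection maps
  set gI : ↥I →ₗ[B] ↥(I.map (Ideal.Quotient.mk Q)) :=
    { toFun := fun i => ⟨Ideal.Quotient.mk Q i.1, Ideal.mem_map_of_mem _ i.2⟩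
      map_add' := by intro i j; ext; simp
      map_smul' := by
        intro b i
        ext
        show Ideal.Quotient.mk Q (b • (i : B)) = b • (Ideal.Quotient.mk Q (i : B))
        rw [← fact3, smul_eq_mul, smul_eq_mul, map_mul] } with hgIdef
  have hgI : Function.Surjective gI := by
    rintro ⟨j, hj⟩
    obtain ⟨i, hi, hij⟩ := Ideal.mem_image_of_mem_map_of_surjective
      (Ideal.Quotient.mk Q) Ideal.Quotient.mk_surjective hj
    exact ⟨⟨i, hi⟩, Subtype.ext hij⟩
  have hmkA : Function.Surjective
      ((Ideal.Quotient.mkₐ B (Q.map (algebraMap B A))).toLinearMap :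
        A →ₗ[B] A ⧸ Q.map (algebraMap B A)) :=
    Ideal.Quotient.mk_surjective
  have hker := TensorProduct.map_ker
    (LinearMap.exact_subtype_ker_map
      ((Ideal.Quotient.mkₐ B (Q.map (algebraMap B A))).toLinearMap :
        A →ₗ[B] A ⧸ Q.map (algebraMap B A))) hmkA
    (LinearMap.exact_subtype_ker_map gI) hgI
  -- the bridge equivalence
  set e := TensorProduct.equivOfCompatibleSMul B (B ⧸ Q) (B ⧸ Q) (A ⧸ Q.map (algebraMap B A))
    ↥(I.map (Ideal.Quotient.mk Q)) with hedef
  have he_symm : ∀ (m : A ⧸ Q.map (algebraMap B A)) (n : ↥(I.map (Ideal.Quotient.mk Q))),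
      e.symm (m ⊗ₜ[B] n) = m ⊗ₜ[B ⧸ Q] n := fun m n =>
    (LinearEquiv.symm_apply_eq e).mpr rfl
  -- the composite computation
  have hcomm : ∀ y : A ⊗[B] I,
      (TensorProduct.rid (B ⧸ Q) (A ⧸ Q.map (algebraMap B A)))
        ((lTensor (A ⧸ Q.map (algebraMap B A))
          (Submodule.subtype (I.map (Ideal.Quotient.mk Q))))
          (e.symm ((TensorProduct.map
            ((Ideal.Quotient.mkₐ B (Q.map (algebraMap B A))).toLinearMap) gI) y)))
      = Ideal.Quotient.mk (Q.map (algebraMap B A))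
          ((TensorProduct.rid B A) (lTensor A (Submodule.subtype I) y)) := by
    intro y
    induction y using TensorProduct.induction_on with
    | zero => simp
    | tmul a i =>
      rw [TensorProduct.map_tmul]
      rw [show ((Ideal.Quotient.mkₐ B (Q.map (algebraMap B A))).toLinearMap a)
        = Ideal.Quotient.mk (Q.map (algebraMap B A)) a from rfl]
      rw [he_symm, lTensor_tmul, TensorProduct.rid_tmul]
      rw [show ((Submodule.subtype (I.map (Ideal.Quotient.mk Q))) (gI i))
        = Ideal.Quotient.mk Q (i : B) from rfl]
      rw [lTensor_tmul, TensorProduct.rid_tmul, fact2, fact1]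
      rfl
    | add u v hu hv => simp only [map_add, hu, hv]
  -- injectivity of the composite, hence vanishing of the mapped element
  have hlt_inj : Function.Injective
      (lTensor (A ⧸ Q.map (algebraMap B A))
        (Submodule.subtype (I.map (Ideal.Quotient.mk Q)))) :=
    Module.Flat.lTensor_preserves_injective_linearMap _ (Submodule.injective_subtype _)
  have hα : (TensorProduct.map
      ((Ideal.Quotient.mkₐ B (Q.map (algebraMap B A))).toLinearMap) gI) x = 0 := by
    have h0 := hcomm x
    rw [hx, map_zero, map_zero] at h0
    apply e.symm.injective
    rw [map_zero]
    apply hlt_inj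
    rw [map_zero]
    apply (TensorProduct.rid (B ⧸ Q) (A ⧸ Q.map (algebraMap B A))).injective
    rw [map_zero]
    exact h0
  have hmem : x ∈ ker (TensorProduct.map
      ((Ideal.Quotient.mkₐ B (Q.map (algebraMap B A))).toLinearMap) gI) := hα
  rw [hker] at hmem
  have hkerg : ker gI
      = Submodule.comap (Submodule.subtype (I : Submodule B B)) (Q : Submodule B B) := by
    ext i
    rw [LinearMap.mem_ker, Submodule.mem_comap]
    constructor
    · intro h
      have : Ideal.Quotient.mk Q (i : B) = 0 := congrArg Subtype.val h
      exact Ideal.Quotient.eq_zero_iff_mem.mp this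
    · intro h
      exact Subtype.ext (Ideal.Quotient.eq_zero_iff_mem.mpr h)
  have hle2 : range (rTensor (↥I)
      (ker ((Ideal.Quotient.mkₐ B (Q.map (algebraMap B A))).toLinearMap :
        A →ₗ[B] A ⧸ Q.map (algebraMap B A))).subtype)
      ≤ Submodule.restrictScalars B
        ((Q.map (algebraMap B A)) • (⊤ : Submodule A (A ⊗[B] I))) := by
    rintro _ ⟨y, rfl⟩
    induction y using TensorProduct.induction_on with
    | zero => simp
    | tmul c i =>
      rw [rTensor_tmul]
      have hc : (c : A) ∈ Q.map (algebraMap B A) := by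
        have := c.2
        rwa [LinearMap.mem_ker, show ((Ideal.Quotient.mkₐ B
          (Q.map (algebraMap B A))).toLinearMap (c : A))
          = Ideal.Quotient.mk (Q.map (algebraMap B A)) (c : A) from rfl,
          Ideal.Quotient.eq_zero_iff_mem] at this
      have heq : ((Submodule.subtype _ c : A)) ⊗ₜ[B] i
          = (c : A) • ((1 : A) ⊗ₜ[B] i : A ⊗[B] I) := by
        rw [smul_tmul', smul_eq_mul, mul_one]
        rfl
      rw [heq]
      exact (Submodule.restrictScalars_mem B _ _).mpr
        (Submodule.smul_mem_smul (M := A ⊗[B] I) hc Submodule.mem_top)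
    | add u v hu hv =>
      rw [map_add]
      exact Submodule.add_mem _ hu hv
  have hle1 : range (lTensor A (ker gI).subtype)
      ≤ LinearMap.range (lTensor A (Submodule.subtype
          (Submodule.comap (Submodule.subtype (I : Submodule B B)) (Q : Submodule B B)))) := by
    rw [hkerg]
  exact (sup_le_sup hle1 hle2) hmem

end

set_option maxHeartbeats 1000000 in
/-- Local flatness criterion: let `B` be a commutative noetherian ring, `K ⊆ B` an ideal, and
`A` a commutative noetherian `B`-algebra such that `K·A` is contained in the Jacobson radical
of `A`.  Then `A` is flat over `B` if and only if `A/K^(n+1)A` is flat over `B/K^(n+1)` for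
every `n : ℕ`. -/
theorem flat_iff_flat_quotients (B A : Type*) [CommRing B] [CommRing A] [Algebra B A]
    [IsNoetherianRing B] [IsNoetherianRing A] (K : Ideal B)
    (hK : K.map (algebraMap B A) ≤ (⊥ : Ideal A).jacobson) :
    Module.Flat B A ↔ ∀ n : ℕ,
      letI : Algebra (B ⧸ K ^ (n + 1)) (A ⧸ (K ^ (n + 1)).map (algebraMap B A)) :=
        (Ideal.quotientMap ((K ^ (n + 1)).map (algebraMap B A)) (algebraMap B A)
          Ideal.le_comap_map).toAlgebra
      Module.Flat (B ⧸ K ^ (n + 1)) (A ⧸ (K ^ (n + 1)).map (algebraMap B A)) := by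
  constructor
  · intro hflat n
    exact flat_quot_aux B A (K ^ (n + 1))
  · intro H
    rw [Module.Flat.iff_lTensor_injective']
    intro I
    rw [← LinearMap.ker_eq_bot, eq_bot_iff]
    intro x hx
    rw [LinearMap.mem_ker] at hx
    rw [Submodule.mem_bot]
    -- finiteness instances
    haveI : Module.Finite B ↥I := Module.Finite.iff_fg.mpr (IsNoetherian.noetherian I)
    haveI : Module.Finite A (A ⊗[B] ↥I) := inferInstance
    -- Krull intersection setup
    suffices hsuff : ∀ i : ℕ,
        x ∈ ((K.map (algebraMap B A)) ^ i • ⊤ : Submodule A (A ⊗[B] ↥I)) from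
      krull_aux (K.map (algebraMap B A)) hK x hsuff
    intro i
    -- Artin-Rees
    obtain ⟨k, hAR⟩ := Ideal.exists_pow_inf_eq_pow_smul K (I : Submodule B B)
    have hARle : (K ^ (i + k + 1) • ⊤ ⊓ (I : Submodule B B) : Submodule B B)
        ≤ K ^ i • (I : Submodule B B) := by
      rw [hAR (i + k + 1) (by omega), show i + k + 1 - k = i + 1 from by omega, pow_succ,
        mul_smul]
      refine smul_mono_right _ ?_
      refine Submodule.smul_le.mpr fun r hr n hn => ?_
      exact Ideal.mul_mem_left _ r hn.2
    have hmem := mem_of_lTensor_eq_zero B A (K ^ (i + k + 1)) I (H (i + k)) x hx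
    obtain ⟨y, hy, z, hz, rfl⟩ := Submodule.mem_sup.mp hmem
    refine Submodule.add_mem _ ?_ ?_
    · -- y is in the image of the "small" part
      obtain ⟨w, rfl⟩ := hy
      clear hx hmem
      induction w using TensorProduct.induction_on with
      | zero => simp
      | tmul a c =>
        rw [lTensor_tmul]
        -- c : comap I.subtype (K^(i+k+1)); its value lies in K^i • I
        have hc1 : ((c : ↥I) : B) ∈ K ^ i • (I : Submodule B B) := by
          apply hARle
          refine ⟨?_, (c : ↥I).2⟩
          have hcQ : ((c : ↥I) : B) ∈ K ^ (i + k + 1) := c.2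
          have : ((c : ↥I) : B) = ((c : ↥I) : B) • (1 : B) := by rw [smul_eq_mul, mul_one]
          rw [this]
          exact Submodule.smul_mem_smul hcQ trivial
        rw [show (K ^ i • (I : Submodule B B) : Submodule B B)
            = Submodule.map (Submodule.subtype (I : Submodule B B))
              (K ^ i • ⊤ : Submodule B ↥I) from by
          rw [Submodule.map_smul'', Submodule.map_top, Submodule.range_subtype]] at hc1
        obtain ⟨c', hc', hcc⟩ := hc1
        have hfin : a ⊗ₜ[B] c' ∈ ((K.map (algebraMap B A)) ^ i • ⊤ :
            Submodule A (A ⊗[B] ↥I)) := by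
          refine Submodule.smul_induction_on hc' (fun r hr n _ => ?_) (fun u v hu hv => ?_)
          · have h1 : a ⊗ₜ[B] (r • n) = (algebraMap B A r) • (a ⊗ₜ[B] n : A ⊗[B] ↥I) := by
              rw [tmul_smul, algebraMap_smul]
            rw [h1]
            have h2 : algebraMap B A r ∈ (K.map (algebraMap B A)) ^ i := by
              rw [← Ideal.map_pow]; exact Ideal.mem_map_of_mem _ hr
            exact Submodule.smul_mem_smul h2 trivial
          · rw [tmul_add]
            exact Submodule.add_mem _ hu hv
        have hceq : (Submodule.subtype
            (Submodule.comap (Submodule.subtype (I : Submodule B B))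
              ((K ^ (i + k + 1) : Ideal B) : Submodule B B))) c = c' :=
          Subtype.ext hcc.symm
        rw [hceq]
        exact hfin
      | add u v hu hv =>
        rw [map_add]
        exact Submodule.add_mem _ hu hv
    · -- z is in the high power part
      have hle : ((K ^ (i + k + 1)).map (algebraMap B A)) • (⊤ : Submodule A (A ⊗[B] ↥I))
          ≤ (K.map (algebraMap B A)) ^ i • ⊤ := by
        refine Submodule.smul_mono_left ?_
        rw [Ideal.map_pow]
        exact Ideal.pow_le_pow_right (by omega)
      exact hle hz
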